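/- Let M, N be positive integers and define polynomials Q_n by Q_0(x)=1, Q_1(x)=x−N, and Q_n(x) = (x−(M+N−2))·Q_{n−1}(x) − (M−1)(N−1)·Q_{n−2}(x) for n ≥ 2. Then for all n ≥ 0, Q_n(x) = ((M−1)(N−1))^{n/2} · [U_n(y) + ((M−2)/√((M−1)(N−1)))·U_{n−1}(y)], where y = (x−(M+N−2))/(2√((M−1)(N−1))) and U_{−1} = 0. -/

import Mathlib

open Polynomial Polynomial.Chebyshev

/-- Lemma 5.1: the polynomials `Q_n` defined by `Q_0 = 1`, `Q_1 = x − N`,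
`Q_n = (x−(M+N−2))·Q_{n−1} − (M−1)(N−1)·Q_{n−2}` satisfy
`Q_n(x) = ((M−1)(N−1))^{n/2}·[U_n(y) + ((M−2)/√((M−1)(N−1)))·U_{n−1}(y)]`,
where `y = (x−(M+N−2))/(2√((M−1)(N−1)))` and `U_{−1} = 0`. -/
theorem Q_eq_chebyshevU (M N : ℕ) (hM : 2 ≤ M) (hN : 2 ≤ N) (Q : ℕ → ℝ → ℝ)
    (hQ0 : ∀ x, Q 0 x = 1)
    (hQ1 : ∀ x, Q 1 x = x - (N : ℝ))
    (hQrec : ∀ n, 2 ≤ n → ∀ x, Q n x =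
      (x - ((M : ℝ) + (N : ℝ) - 2)) * Q (n - 1) x - ((M : ℝ) - 1) * ((N : ℝ) - 1) * Q (n - 2) x)
    (n : ℕ) (x : ℝ) :
    Q n x = (((M : ℝ) - 1) * ((N : ℝ) - 1)) ^ ((n : ℝ) / 2) *
      ((U ℝ n).eval ((x - ((M : ℝ) + (N : ℝ) - 2)) / (2 * Real.sqrt (((M : ℝ) - 1) * ((N : ℝ) - 1))))
        + (((M : ℝ) - 2) / Real.sqrt (((M : ℝ) - 1) * ((N : ℝ) - 1))) *
          (if 1 ≤ n then
            (U ℝ ((n : ℤ) - 1)).eval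
              ((x - ((M : ℝ) + (N : ℝ) - 2)) / (2 * Real.sqrt (((M : ℝ) - 1) * ((N : ℝ) - 1))))
          else 0)) := by
  have hM1 : (1:ℝ) ≤ (M:ℝ) := by exact_mod_cast Nat.one_le_of_lt hM
  have hN1 : (1:ℝ) ≤ (N:ℝ) := by exact_mod_cast Nat.one_le_of_lt hN
  set c : ℝ := ((M : ℝ) - 1) * ((N : ℝ) - 1) with hc
  have hM2 : (2:ℝ) ≤ (M:ℝ) := by exact_mod_cast hM
  have hN2 : (2:ℝ) ≤ (N:ℝ) := by exact_mod_cast hN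
  have hcpos : 0 < c := mul_pos (by linarith) (by linarith)
  set s : ℝ := Real.sqrt c with hsdef
  have hs : 0 < s := Real.sqrt_pos.mpr hcpos
  have hs2 : s ^ 2 = c := Real.sq_sqrt hcpos.le
  set y : ℝ := (x - ((M : ℝ) + (N : ℝ) - 2)) / (2 * s) with hy
  have hys : 2 * s * y = x - ((M : ℝ) + (N : ℝ) - 2) := by
    rw [hy]; field_simp
  have hpow : ∀ m : ℕ, c ^ ((m : ℝ) / 2) = s ^ m := by
    intro m
    rw [← Real.rpow_natCast s m, hsdef, Real.sqrt_eq_rpow, ← Real.rpow_mul hcpos.le]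
    congr 1
    ring
  have key : ∀ m : ℕ, Q m x =
      s ^ m * ((U ℝ m).eval y + (((M:ℝ) - 2) / s) * (U ℝ ((m : ℤ) - 1)).eval y) := by
    intro m
    induction m using Nat.strong_induction_on with
    | _ m ih =>
      match m with
      | 0 => simp [hQ0, U_zero, U_neg_one]
      | 1 =>
        have : (U ℝ ((1:ℤ) - 1)) = 1 := U_zero ℝ
        simp only [hQ1, Nat.cast_one, pow_one, this, U_one]
        have hsne : s ≠ 0 := ne_of_gt hs
        field_simp
        simp only [eval_mul, eval_ofNat, eval_X, eval_one]
        linarith [hys]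
      | (k+2) =>
        have h1 := ih (k+1) (by omega)
        have h0 := ih k (by omega)
        have hrec := hQrec (k+2) (by omega) x
        simp only [Nat.add_sub_cancel, show k + 2 - 1 = k + 1 from rfl] at hrec
        have hU2 : (U ℝ ((k:ℤ)+2)).eval y = 2 * y * (U ℝ ((k:ℤ)+1)).eval y - (U ℝ (k:ℤ)).eval y := by
          rw [U_add_two]; simp
        have hU1 : (U ℝ ((k:ℤ)+1)).eval y
            = 2 * y * (U ℝ (k:ℤ)).eval y - (U ℝ ((k:ℤ)-1)).eval y := by
          have := U_add_two ℝ ((k:ℤ) - 1)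
          rw [show (k:ℤ) - 1 + 2 = (k:ℤ) + 1 by ring, show (k:ℤ) - 1 + 1 = (k:ℤ) by ring] at this
          rw [this]; simp
        rw [hrec, h1, h0]
        push_cast
        rw [show ((k:ℤ) + 2 - 1) = (k:ℤ) + 1 by ring, show ((k:ℤ) + 1 - 1) = (k:ℤ) by ring,
          hU2, hU1]
        have hsne : s ≠ 0 := ne_of_gt hs
        have hxs : x - ((M : ℝ) + (N : ℝ) - 2) = 2 * s * y := hys.symm
        rw [hxs, ← hs2]
        field_simp
        ring
  rw [key n, ← hpow n]
  rcases Nat.eq_zero_or_pos n with h | h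
  · subst h
    simp [U_neg_one]
  · rw [if_pos (show 1 ≤ n from h)]
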